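/- Let $H$ be a $k$-uniform hypergraph on a finite vertex set $X$ such that every edge of $H$ intersects at most $d$ other edges. If $e(d+1) \leq 2^{k-1}$ (where $e$ is the base of the natural logarithm), then $H$ admits a proper 2-coloring: a map $f : X \to \{0,1\}$ such that no edge of $H$ is monochromatic. -/

import Mathlib

open Finset

section LLL

variable {X : Type*} [Fintype X] [DecidableEq X]

/-- An edge is monochromatic under a coloring. -/
def IsMono (e : Finset X) (f : X → Bool) : Prop := ∃ b, ∀ x ∈ e, f x = b

instance (e : Finset X) (f : X → Bool) : Decidable (IsMono e f) := by
  unfold IsMono; infer_instance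

/-- The set of colorings with no monochromatic edge among `S`. -/
def Gd (S : Finset (Finset X)) : Finset (X → Bool) :=
  univ.filter (fun f => ∀ e ∈ S, ¬ IsMono e f)

lemma gd_anti {S T : Finset (Finset X)} (h : T ⊆ S) : Gd S ⊆ Gd T := by
  intro f hf
  simp only [Gd, mem_filter, mem_univ, true_and] at *
  exact fun e he => hf e (h he)

lemma isMono_congr {e : Finset X} {f g : X → Bool} (h : ∀ x ∈ e, f x = g x) :
    IsMono e f ↔ IsMono e g := by
  unfold IsMono
  constructor <;> rintro ⟨b, hb⟩ <;> refine ⟨b, fun x hx => ?_⟩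
  · rw [← h x hx]; exact hb x hx
  · rw [h x hx]; exact hb x hx

/-- Split colorings according to membership in `e`. -/
def splitEquiv (e : Finset X) :
    (X → Bool) ≃ (({x : X // x ∈ e} → Bool) × ({x : X // x ∉ e} → Bool)) where
  toFun f := (fun x => f x.1, fun x => f x.1)
  invFun p x := if hx : x ∈ e then p.1 ⟨x, hx⟩ else p.2 ⟨x, hx⟩
  left_inv f := by
    funext x; dsimp only; split <;> rfl
  right_inv p := by
    obtain ⟨g, h⟩ := p
    refine Prod.ext ?_ ?_ <;> funext x <;> dsimp only
    · rw [dif_pos x.2]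
    · rw [dif_neg x.2]

lemma card_filter_split (e : Finset X) (P : ({x : X // x ∈ e} → Bool) → Prop)
    (Q : ({x : X // x ∉ e} → Bool) → Prop) [DecidablePred P] [DecidablePred Q] :
    (univ.filter (fun f : X → Bool => P ((splitEquiv e) f).1 ∧ Q ((splitEquiv e) f).2)).card
      = (univ.filter P).card * (univ.filter Q).card := by
  rw [← Fintype.card_subtype, ← Fintype.card_subtype, ← Fintype.card_subtype,
    ← Fintype.card_prod]
  exact Fintype.card_congr
    ((Equiv.subtypeEquiv (splitEquiv e) (fun f => Iff.rfl)).trans Equiv.subtypeProdEquivProd)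

lemma card_const (α : Type*) [Fintype α] [DecidableEq α] [Nonempty α] :
    (univ.filter (fun g : α → Bool => ∃ b, ∀ x, g x = b)).card = 2 := by
  rw [← Fintype.card_subtype]
  have E : {g : α → Bool // ∃ b, ∀ x, g x = b} ≃ Bool :=
    { toFun := fun g => g.1 (Classical.arbitrary α)
      invFun := fun b => ⟨fun _ => b, b, fun _ => rfl⟩
      left_inv := fun g => by
        obtain ⟨g, b, hb⟩ := g
        apply Subtype.ext
        funext x
        simp only [hb]
      right_inv := fun b => rfl }
  rw [Fintype.card_congr E, Fintype.card_bool]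

/-- Extend a coloring of the complement of `e` by `true` on `e`. -/
def extendF (e : Finset X) (h : {x : X // x ∉ e} → Bool) : X → Bool :=
  fun x => if hx : x ∈ e then true else h ⟨x, hx⟩

/-- Independence: among colorings good for a family `S` of edges disjoint from `e`,
exactly a `2^(1-|e|)` fraction makes `e` monochromatic. -/
lemma count_lemma (e : Finset X) (he : e.Nonempty)
    (S : Finset (Finset X)) (hdisj : ∀ e' ∈ S, ∀ x ∈ e', x ∉ e) :
    2 ^ e.card * ((Gd S).filter (IsMono e)).card = 2 * (Gd S).card := by
  classical
  have : Nonempty {x : X // x ∈ e} := ⟨⟨he.choose, he.choose_spec⟩⟩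
  set Q : ({x : X // x ∉ e} → Bool) → Prop :=
    fun h => ∀ e' ∈ S, ¬ IsMono e' (extendF e h) with hQ
  have hiff : ∀ f : X → Bool, (∀ e' ∈ S, ¬ IsMono e' f) ↔ Q ((splitEquiv e) f).2 := by
    intro f
    apply forall_congr'; intro e'
    apply imp_congr_right; intro he'
    apply not_congr
    apply isMono_congr
    intro x hx
    have hxe : x ∉ e := hdisj e' he' x hx
    simp [splitEquiv, extendF, hxe]
  have h1 : (Gd S).filter (IsMono e)
      = univ.filter (fun f : X → Bool =>
          (∃ b, ∀ x : {x : X // x ∈ e}, ((splitEquiv e) f).1 x = b) ∧ Q ((splitEquiv e) f).2) := by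
    ext f
    simp only [Gd, mem_filter, mem_univ, true_and]
    rw [and_comm]
    apply and_congr
    · constructor
      · rintro ⟨b, hb⟩; exact ⟨b, fun x => hb x.1 x.2⟩
      · rintro ⟨b, hb⟩; exact ⟨b, fun x hx => hb ⟨x, hx⟩⟩
    · exact hiff f
  have h2 : Gd S = univ.filter (fun f : X → Bool =>
      (fun _ : {x : X // x ∈ e} → Bool => True) ((splitEquiv e) f).1 ∧ Q ((splitEquiv e) f).2) := by
    ext f
    simp only [Gd, mem_filter, mem_univ, true_and]
    exact hiff f
  rw [h1, h2, card_filter_split e (fun g => ∃ b, ∀ x, g x = b) Q,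
    card_filter_split e (fun _ => True) Q]
  have hc1 : (univ.filter (fun g : {x : X // x ∈ e} → Bool => ∃ b, ∀ x, g x = b)).card = 2 :=
    card_const _
  have hc2 : (univ.filter (fun _ : {x : X // x ∈ e} → Bool => True)).card = 2 ^ e.card := by
    rw [filter_true, card_univ, Fintype.card_fun, Fintype.card_bool, Fintype.card_coe]
  rw [hc1, hc2]
  ring

end LLL

section Main

variable {X : Type*} [Fintype X] [DecidableEq X]

lemma numeric_ineq (d t k : ℕ) (ht : t ≤ d)
    (hcond : Real.exp 1 * ((d : ℝ) + 1) ≤ (2 : ℝ) ^ (k - 1)) :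
    ((d : ℝ) + 2) ^ (t + 1) ≤ (2 : ℝ) ^ (k - 1) * ((d : ℝ) + 1) ^ t := by
  have hD : (0 : ℝ) < (d : ℝ) + 1 := by positivity
  have hle : (d : ℝ) + 2 ≤ Real.exp (1 / ((d : ℝ) + 1)) * ((d : ℝ) + 1) := by
    have h := Real.add_one_le_exp (1 / ((d : ℝ) + 1))
    calc (d : ℝ) + 2 = (1 / ((d : ℝ) + 1) + 1) * ((d : ℝ) + 1) := by field_simp; ring
      _ ≤ Real.exp (1 / ((d : ℝ) + 1)) * ((d : ℝ) + 1) :=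
        mul_le_mul_of_nonneg_right h hD.le
  have hexp : Real.exp (1 / ((d : ℝ) + 1)) ^ (t + 1) ≤ Real.exp 1 := by
    rw [← Real.exp_nat_mul]
    apply Real.exp_le_exp.mpr
    rw [Nat.cast_add, Nat.cast_one]
    rw [mul_one_div, div_le_one hD]
    have : (t : ℝ) ≤ (d : ℝ) := Nat.cast_le.mpr ht
    linarith
  calc ((d : ℝ) + 2) ^ (t + 1)
      ≤ (Real.exp (1 / ((d : ℝ) + 1)) * ((d : ℝ) + 1)) ^ (t + 1) :=
        pow_le_pow_left₀ (by positivity) hle _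
    _ = Real.exp (1 / ((d : ℝ) + 1)) ^ (t + 1) * (((d : ℝ) + 1) * ((d : ℝ) + 1) ^ t) := by
        rw [mul_pow]; ring
    _ ≤ Real.exp 1 * (((d : ℝ) + 1) * ((d : ℝ) + 1) ^ t) := by
        apply mul_le_mul_of_nonneg_right hexp (by positivity)
    _ = (Real.exp 1 * ((d : ℝ) + 1)) * ((d : ℝ) + 1) ^ t := by ring
    _ ≤ (2 : ℝ) ^ (k - 1) * ((d : ℝ) + 1) ^ t :=
        mul_le_mul_of_nonneg_right hcond (by positivity)

lemma key_lemma (k d : ℕ) (H : Finset (Finset X))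
    (hk : ∀ e ∈ H, e.card = k)
    (hd : ∀ e ∈ H, (H.filter (fun e' => e' ≠ e ∧ (e' ∩ e).Nonempty)).card ≤ d)
    (hcond : Real.exp 1 * ((d : ℝ) + 1) ≤ (2 : ℝ) ^ (k - 1)) (hk1 : 1 ≤ k) :
    ∀ n (S : Finset (Finset X)), S.card = n → S ⊆ H → ∀ e ∈ H,
      ((d : ℝ) + 1) * ((Gd S).card : ℝ) ≤ ((d : ℝ) + 2) * ((Gd (insert e S)).card : ℝ) := by
  intro n
  induction n using Nat.strong_induction_on with
  | _ n ih =>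
    intro S hcard hSH e heH
    by_cases heS : e ∈ S
    · rw [insert_eq_self.mpr heS]
      have : (0 : ℝ) ≤ ((Gd S).card : ℝ) := Nat.cast_nonneg _
      nlinarith [Nat.cast_nonneg (α := ℝ) d]
    -- split S
    set S1 : Finset (Finset X) := S.filter (fun e' => (e' ∩ e).Nonempty) with hS1
    set S2 : Finset (Finset X) := S.filter (fun e' => ¬ (e' ∩ e).Nonempty) with hS2
    have hS1sub : S1 ⊆ S := filter_subset _ _
    have hS2sub : S2 ⊆ S := filter_subset _ _
    have hsplitcard : S1.card + S2.card = S.card :=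
      card_filter_add_card_filter_not _
    have hunion : S2 ∪ S1 = S := by
      rw [union_comm]; exact filter_union_filter_not_eq _ S
    -- t ≤ d
    have ht : S1.card ≤ d := by
      refine le_trans (card_le_card ?_) (hd e heH)
      intro e' he'
      simp only [hS1, mem_filter] at he'
      refine mem_filter.mpr ⟨hSH he'.1, ?_, he'.2⟩
      rintro rfl
      exact heS he'.1
    set t := S1.card with htdef
    -- e is nonempty
    have hek : e.card = k := hk e heH
    have hene : e.Nonempty := card_pos.mp (by omega)
    -- disjointness of S2 from e
    have hdisj : ∀ e' ∈ S2, ∀ x ∈ e', x ∉ e := by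
      intro e' he' x hx hxe
      simp only [hS2, mem_filter] at he'
      exact he'.2 ⟨x, mem_inter.mpr ⟨hx, hxe⟩⟩
    -- counting lemma
    have hcount : 2 ^ k * ((Gd S2).filter (IsMono e)).card = 2 * (Gd S2).card := by
      rw [← hek]; exact count_lemma e hene S2 hdisj
    -- decomposition
    have hGdins : Gd (insert e S) = (Gd S).filter (fun f => ¬ IsMono e f) := by
      ext f
      simp only [Gd, mem_filter, mem_univ, true_and, mem_insert]
      constructor
      · intro h
        exact ⟨fun e' he' => h e' (Or.inr he'), h e (Or.inl rfl)⟩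
      · rintro ⟨h1, h2⟩ e' he'
        rcases he' with rfl | he'
        · exact h2
        · exact h1 e' he'
    have hdecomp : ((Gd S).filter (IsMono e)).card + (Gd (insert e S)).card = (Gd S).card := by
      rw [hGdins]
      exact card_filter_add_card_filter_not _
    have hBle : ((Gd S).filter (IsMono e)).card ≤ ((Gd S2).filter (IsMono e)).card :=
      card_le_card (filter_subset_filter _ (gd_anti hS2sub))
    -- chain lemma
    have chain : ∀ T : Finset (Finset X), T ⊆ S1 →
        ((d : ℝ) + 1) ^ T.card * ((Gd S2).card : ℝ)
          ≤ ((d : ℝ) + 2) ^ T.card * ((Gd (S2 ∪ T)).card : ℝ) := by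
      intro T
      induction T using Finset.induction_on with
      | empty => intro _; simp
      | @insert a T ha ihT =>
        intro hins
        have hTsub : T ⊆ S1 := fun x hx => hins (mem_insert_of_mem hx)
        have haS1 : a ∈ S1 := hins (mem_insert_self a T)
        have hstep := ihT hTsub
        have hTlt : T.card < S1.card :=
          card_lt_card ((Finset.ssubset_iff_of_subset hTsub).mpr ⟨a, haS1, ha⟩)
        have hcardlt : (S2 ∪ T).card < n := by
          have h1 : (S2 ∪ T).card ≤ S2.card + T.card := card_union_le _ _
          omega
        have haH : a ∈ H := hSH (hS1sub haS1)
        have hsubH : S2 ∪ T ⊆ H := by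
          intro x hx
          rcases mem_union.mp hx with h | h
          · exact hSH (hS2sub h)
          · exact hSH (hS1sub (hTsub h))
        have hstep2 := ih _ hcardlt (S2 ∪ T) rfl hsubH a haH
        rw [card_insert_of_notMem ha]
        have hrw : S2 ∪ insert a T = insert a (S2 ∪ T) := by
          rw [union_insert]
        rw [hrw, pow_succ, pow_succ]
        have hd2 : (0 : ℝ) ≤ (d : ℝ) + 2 := by positivity
        have hd1 : (0 : ℝ) ≤ (d : ℝ) + 1 := by positivity
        calc ((d : ℝ) + 1) ^ T.card * ((d : ℝ) + 1) * ((Gd S2).card : ℝ)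
            = ((d : ℝ) + 1) * (((d : ℝ) + 1) ^ T.card * ((Gd S2).card : ℝ)) := by ring
          _ ≤ ((d : ℝ) + 1) * (((d : ℝ) + 2) ^ T.card * ((Gd (S2 ∪ T)).card : ℝ)) :=
              mul_le_mul_of_nonneg_left hstep hd1
          _ = ((d : ℝ) + 2) ^ T.card * (((d : ℝ) + 1) * ((Gd (S2 ∪ T)).card : ℝ)) := by ring
          _ ≤ ((d : ℝ) + 2) ^ T.card * (((d : ℝ) + 2) * ((Gd (insert a (S2 ∪ T))).card : ℝ)) :=
              mul_le_mul_of_nonneg_left hstep2 (by positivity)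
          _ = ((d : ℝ) + 2) ^ T.card * ((d : ℝ) + 2) * ((Gd (insert a (S2 ∪ T))).card : ℝ) := by
              ring
    have hchain := chain S1 (subset_refl _)
    rw [hunion] at hchain
    -- real versions
    set a : ℝ := ((Gd (insert e S)).card : ℝ) with hadef
    set b : ℝ := (((Gd S).filter (IsMono e)).card : ℝ) with hbdef
    set b' : ℝ := (((Gd S2).filter (IsMono e)).card : ℝ) with hb'def
    set g2 : ℝ := ((Gd S2).card : ℝ) with hg2def
    set gs : ℝ := ((Gd S).card : ℝ) with hgsdef
    have hgsab : b + a = gs := by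
      rw [hadef, hbdef, hgsdef, ← Nat.cast_add, hdecomp]
    have hbb' : b ≤ b' := Nat.cast_le.mpr hBle
    have hcountR : (2 : ℝ) ^ k * b' = 2 * g2 := by
      have := congrArg (Nat.cast (R := ℝ)) hcount
      push_cast at this
      exact this
    have h2k : (2 : ℝ) ^ k = 2 * 2 ^ (k - 1) := by
      have hk' : k - 1 + 1 = k := Nat.succ_pred_eq_of_pos hk1
      conv_lhs => rw [← hk']
      rw [pow_succ]
      ring
    have hhalf : (2 : ℝ) ^ (k - 1) * b' = g2 := by
      rw [h2k] at hcountR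
      have h2 : (2 : ℝ) ≠ 0 := two_ne_zero
      apply mul_left_cancel₀ h2
      rw [← hcountR]; ring
    have hnum : ((d : ℝ) + 2) ^ (t + 1) ≤ (2 : ℝ) ^ (k - 1) * ((d : ℝ) + 1) ^ t :=
      numeric_ineq d t k ht hcond
    have hb'nn : (0 : ℝ) ≤ b' := Nat.cast_nonneg _
    have hbnn : (0 : ℝ) ≤ b := Nat.cast_nonneg _
    have h3 : ((d : ℝ) + 2) ^ (t + 1) * b ≤ ((d : ℝ) + 2) ^ t * gs := by
      calc ((d : ℝ) + 2) ^ (t + 1) * b ≤ ((d : ℝ) + 2) ^ (t + 1) * b' :=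
            mul_le_mul_of_nonneg_left hbb' (by positivity)
        _ ≤ ((2 : ℝ) ^ (k - 1) * ((d : ℝ) + 1) ^ t) * b' :=
            mul_le_mul_of_nonneg_right hnum hb'nn
        _ = ((d : ℝ) + 1) ^ t * ((2 : ℝ) ^ (k - 1) * b') := by ring
        _ = ((d : ℝ) + 1) ^ t * g2 := by rw [hhalf]
        _ ≤ ((d : ℝ) + 2) ^ t * gs := hchain
    have h4 : ((d : ℝ) + 2) * b ≤ gs := by
      have hp : (0 : ℝ) < ((d : ℝ) + 2) ^ t := by positivity
      have h3' : ((d : ℝ) + 2) ^ t * (((d : ℝ) + 2) * b) ≤ ((d : ℝ) + 2) ^ t * gs := by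
        rw [pow_succ] at h3
        calc ((d : ℝ) + 2) ^ t * (((d : ℝ) + 2) * b)
            = ((d : ℝ) + 2) ^ t * ((d : ℝ) + 2) * b := by ring
          _ ≤ ((d : ℝ) + 2) ^ t * gs := h3
      exact (mul_le_mul_iff_right₀ hp).mp h3'
    have hdnn : (0 : ℝ) ≤ (d : ℝ) := Nat.cast_nonneg _
    have h5 : ((d : ℝ) + 1) * b ≤ a := by linarith
    rw [← hgsab]
    nlinarith [h5]

theorem hypergraph_two_coloring_of_LLL'
    (k d : ℕ) (H : Finset (Finset X))
    (hk : ∀ e ∈ H, e.card = k)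
    (hd : ∀ e ∈ H, (H.filter (fun e' => e' ≠ e ∧ (e' ∩ e).Nonempty)).card ≤ d)
    (hcond : Real.exp 1 * ((d : ℝ) + 1) ≤ (2 : ℝ) ^ (k - 1)) :
    ∃ f : X → Bool, ∀ e ∈ H, (∃ x ∈ e, f x = true) ∧ (∃ x ∈ e, f x = false) := by
  have hexp : (2 : ℝ) ≤ Real.exp 1 := by
    have := Real.add_one_le_exp 1; linarith
  have hk1 : 1 ≤ k := by
    by_contra h
    push_neg at h
    interval_cases k
    simp only [Nat.zero_sub, pow_zero] at hcond
    nlinarith [Nat.cast_nonneg (α := ℝ) d]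
  have main : ∀ T : Finset (Finset X), T ⊆ H → (Gd T).Nonempty := by
    intro T
    induction T using Finset.induction_on with
    | empty =>
      intro _
      refine ⟨fun _ => true, ?_⟩
      simp [Gd]
    | @insert a T ha ihT =>
      intro hsub
      have hT : T ⊆ H := fun x hx => hsub (mem_insert_of_mem hx)
      have hpos : 0 < (Gd T).card := card_pos.mpr (ihT hT)
      have hkey := key_lemma k d H hk hd hcond hk1 T.card T rfl hT a (hsub (mem_insert_self a T))
      rw [← card_pos]
      by_contra h
      push_neg at h
      have h0 : (Gd (insert a T)).card = 0 := Nat.le_zero.mp h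
      rw [h0] at hkey
      simp only [Nat.cast_zero, mul_zero] at hkey
      have : (0 : ℝ) < ((d : ℝ) + 1) * ((Gd T).card : ℝ) := by
        apply mul_pos (by positivity)
        exact_mod_cast hpos
      linarith
  obtain ⟨f, hf⟩ := main H (subset_refl H)
  refine ⟨f, fun e heH => ?_⟩
  simp only [Gd, mem_filter, mem_univ, true_and] at hf
  have hm := hf e heH
  constructor
  · by_contra h
    push_neg at h
    refine hm ⟨false, fun x hx => ?_⟩
    have := h x hx
    revert this
    cases f x <;> simp
  · by_contra h
    push_neg at h
    refine hm ⟨true, fun x hx => ?_⟩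
    have := h x hx
    revert this
    cases f x <;> simp

end Main

/-- Erdős–Lovász: a `k`-uniform hypergraph on a finite vertex set in which every edge
intersects at most `d` other edges is 2-colorable provided `e(d+1) ≤ 2^(k-1)`. -/
theorem hypergraph_two_coloring_of_LLL
    {X : Type*} [Fintype X] [DecidableEq X]
    (k d : ℕ) (H : Finset (Finset X))
    (hk : ∀ e ∈ H, e.card = k)
    (hd : ∀ e ∈ H, (H.filter (fun e' => e' ≠ e ∧ (e' ∩ e).Nonempty)).card ≤ d)
    (hcond : Real.exp 1 * ((d : ℝ) + 1) ≤ (2 : ℝ) ^ (k - 1)) :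
    ∃ f : X → Bool, ∀ e ∈ H, (∃ x ∈ e, f x = true) ∧ (∃ x ∈ e, f x = false) :=
  hypergraph_two_coloring_of_LLL' k d H hk hd hcond
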